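/- arXiv:2306.10132 — 5 statements merged into one kernel-verified Lean document; each statement's English description precedes it below -/
import Mathlib

section
/- Let K_m⁻ and K_n⁻ be all-negative complete graphs with m ≥ n, and let ζ₁ be a positive k-switching function for K_m⁻ with vertices u₁,…,u_m. Then ζ((u_i, v_j)) = ζ₁(u_{((i+j−2) mod m)+1}) defines a positive k-switching function for the Cartesian product K_m⁻ □ K_n⁻. -/
open Finset
open scoped Classical

/-- A signed graph: a simple graph together with a ±1 sign on each edge. -/
structure SGraph (V : Type*) where
  G : SimpleGraph V
  sign : V → V → ℤ
  sign_symm : ∀ u v, sign u v = sign v u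
  sign_mem : ∀ u v, G.Adj u v → sign u v = 1 ∨ sign u v = -1

variable {V V1 V2 W : Type*}

/-- `ζ` is a positive k-switching function for the signed graph `S`. -/
def IsPosSwitching [Fintype V] (S : SGraph V) (k : ℕ) (ζ : V → Fin k → ℤ) : Prop :=
  (∀ v i, ζ v i = -1 ∨ ζ v i = 0 ∨ ζ v i = 1) ∧
  (∀ u v, S.G.Adj u v → (∑ i, ζ u i * ζ v i) ≠ 0) ∧
  (∀ u v, S.G.Adj u v → S.sign u v * Int.sign (∑ i, ζ u i * ζ v i) = 1)

def HasPosSwitching [Fintype V] (S : SGraph V) (k : ℕ) : Prop :=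
  ∃ ζ : V → Fin k → ℤ, IsPosSwitching S k ζ

/-- The balancing dimension: least `k ≥ 1` admitting a positive k-switching function. -/
noncomputable def bdim [Fintype V] (S : SGraph V) : ℕ :=
  sInf {k | 1 ≤ k ∧ HasPosSwitching S k}

/-- A signed graph is balanced iff it can be switched to all-positive by a 1-switching. -/
def SGraph.Balanced [Fintype V] (S : SGraph V) : Prop := HasPosSwitching S 1

/-- The negation of a signed graph. -/
def SGraph.neg (S : SGraph V) : SGraph V where
  G := S.G
  sign := fun u v => - S.sign u v
  sign_symm := fun u v => by (try dsimp only); rw [S.sign_symm]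
  sign_mem := fun u v h => by rcases S.sign_mem u v h with h1 | h1 <;> simp [h1]

def SGraph.Antibalanced [Fintype V] (S : SGraph V) : Prop := S.neg.Balanced

/-- Switching equivalence of signed graphs. -/
def SwitchEquiv (S1 S2 : SGraph V) : Prop :=
  S1.G = S2.G ∧ ∃ η : V → ℤ, (∀ v, η v = 1 ∨ η v = -1) ∧
    ∀ u v, S1.G.Adj u v → S2.sign u v = η u * S1.sign u v * η v

/-- The Cartesian product of signed graphs. -/
noncomputable def cartProd (S1 : SGraph V1) (S2 : SGraph V2) : SGraph (V1 × V2) where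
  G := S1.G □ S2.G
  sign := fun p q => if p.2 = q.2 then S1.sign p.1 q.1 else S2.sign p.2 q.2
  sign_symm := by
    intro u v
    try dsimp only
    rcases eq_or_ne u.2 v.2 with h | h
    · rw [if_pos h, if_pos h.symm, S1.sign_symm]
    · rw [if_neg h, if_neg (Ne.symm h), S2.sign_symm]
  sign_mem := by
    intro u v h
    try dsimp only
    rcases (SimpleGraph.boxProd_adj.mp h) with ⟨h1, h2⟩ | ⟨h1, h2⟩
    · rw [if_pos h2]; exact S1.sign_mem _ _ h1
    · rw [if_neg h1.ne]; exact S2.sign_mem _ _ h1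
/-- The HG-lexicographic product of signed graphs. -/
noncomputable def lexHG (S1 : SGraph V1) (S2 : SGraph V2) : SGraph (V1 × V2) where
  G := { Adj := fun p q => S1.G.Adj p.1 q.1 ∨ (p.1 = q.1 ∧ S2.G.Adj p.2 q.2)
         symm := by
           constructor
           rintro p q (h | ⟨h1, h2⟩)
           · exact Or.inl h.symm
           · exact Or.inr ⟨h1.symm, h2.symm⟩
         loopless := by
           constructor
           rintro p (h | ⟨_, h⟩)
           · exact S1.G.irrefl h
           · exact S2.G.irrefl h }
  sign := fun p q => if p.1 = q.1 then S2.sign p.2 q.2 else S1.sign p.1 q.1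
  sign_symm := by
    intro u v
    try dsimp only
    rcases eq_or_ne u.1 v.1 with h | h
    · rw [if_pos h, if_pos h.symm, S2.sign_symm]
    · rw [if_neg h, if_neg (Ne.symm h), S1.sign_symm]
  sign_mem := by
    rintro p q (h | ⟨h1, h2⟩)
    · (try dsimp only); rw [if_neg h.ne]; exact S1.sign_mem _ _ h
    · (try dsimp only); rw [if_pos h1]; exact S2.sign_mem _ _ h2

/-- The BCD-lexicographic product of signed graphs. -/
noncomputable def lexBCD (S1 : SGraph V1) (S2 : SGraph V2) : SGraph (V1 × V2) where
  G := { Adj := fun p q => S1.G.Adj p.1 q.1 ∨ (p.1 = q.1 ∧ S2.G.Adj p.2 q.2)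
         symm := by
           constructor
           rintro p q (h | ⟨h1, h2⟩)
           · exact Or.inl h.symm
           · exact Or.inr ⟨h1.symm, h2.symm⟩
         loopless := by
           constructor
           rintro p (h | ⟨_, h⟩)
           · exact S1.G.irrefl h
           · exact S2.G.irrefl h }
  sign := fun p q =>
    if S2.G.Adj p.2 q.2 then
      (if S1.G.Adj p.1 q.1 then S1.sign p.1 q.1 * S2.sign p.2 q.2 else S2.sign p.2 q.2)
    else S1.sign p.1 q.1
  sign_symm := by
    intro u v
    try dsimp only
    rw [S1.G.adj_comm v.1 u.1, S2.G.adj_comm v.2 u.2, S1.sign_symm v.1 u.1,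
      S2.sign_symm v.2 u.2]
  sign_mem := by
    rintro p q (h | ⟨h1, h2⟩) <;> try dsimp only
    · by_cases h2 : S2.G.Adj p.2 q.2
      · rw [if_pos h2, if_pos h]
        rcases S1.sign_mem _ _ h with e1 | e1 <;> rcases S2.sign_mem _ _ h2 with e2 | e2 <;>
          simp [e1, e2]
      · rw [if_neg h2]; exact S1.sign_mem _ _ h
    · rw [if_pos h2, if_neg (h1 ▸ S1.G.irrefl)]
      exact S2.sign_mem _ _ h2

/-- The tensor product of signed graphs. -/
def tensorProd (S1 : SGraph V1) (S2 : SGraph V2) : SGraph (V1 × V2) where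
  G := { Adj := fun p q => S1.G.Adj p.1 q.1 ∧ S2.G.Adj p.2 q.2
         symm := ⟨fun p q ⟨h1, h2⟩ => ⟨h1.symm, h2.symm⟩⟩
         loopless := ⟨fun p ⟨h1, _⟩ => S1.G.irrefl h1⟩ }
  sign := fun p q => S1.sign p.1 q.1 * S2.sign p.2 q.2
  sign_symm := by
    intro u v
    try dsimp only
    rw [S1.sign_symm, S2.sign_symm]
  sign_mem := by
    rintro p q ⟨h1, h2⟩
    try dsimp only
    rcases S1.sign_mem _ _ h1 with e1 | e1 <;> rcases S2.sign_mem _ _ h2 with e2 | e2 <;>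
      simp [e1, e2]

/-- The strong product of signed graphs. -/
noncomputable def strongProd (S1 : SGraph V1) (S2 : SGraph V2) : SGraph (V1 × V2) where
  G := { Adj := fun p q => (S1.G.Adj p.1 q.1 ∧ p.2 = q.2) ∨ (p.1 = q.1 ∧ S2.G.Adj p.2 q.2) ∨
           (S1.G.Adj p.1 q.1 ∧ S2.G.Adj p.2 q.2)
         symm := by
           constructor
           rintro p q (⟨h1, h2⟩ | ⟨h1, h2⟩ | ⟨h1, h2⟩)
           · exact Or.inl ⟨h1.symm, h2.symm⟩
           · exact Or.inr (Or.inl ⟨h1.symm, h2.symm⟩)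
           · exact Or.inr (Or.inr ⟨h1.symm, h2.symm⟩)
         loopless := by
           constructor
           rintro p (⟨h1, _⟩ | ⟨_, h2⟩ | ⟨h1, _⟩)
           · exact S1.G.irrefl h1
           · exact S2.G.irrefl h2
           · exact S1.G.irrefl h1 }
  sign := fun p q =>
    if p.1 = q.1 then S2.sign p.2 q.2
    else if p.2 = q.2 then S1.sign p.1 q.1
    else S1.sign p.1 q.1 * S2.sign p.2 q.2
  sign_symm := by
    intro u v
    try dsimp only
    rcases eq_or_ne u.1 v.1 with h | h
    · rw [if_pos h, if_pos h.symm, S2.sign_symm]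
    · rw [if_neg h, if_neg (Ne.symm h)]
      rcases eq_or_ne u.2 v.2 with h' | h'
      · rw [if_pos h', if_pos h'.symm, S1.sign_symm]
      · rw [if_neg h', if_neg (Ne.symm h'), S1.sign_symm, S2.sign_symm]
  sign_mem := by
    rintro p q (⟨h1, h2⟩ | ⟨h1, h2⟩ | ⟨h1, h2⟩) <;> try dsimp only
    · rw [if_neg h1.ne, if_pos h2]; exact S1.sign_mem _ _ h1
    · rw [if_pos h1]; exact S2.sign_mem _ _ h2
    · rw [if_neg h1.ne, if_neg h2.ne]
      rcases S1.sign_mem _ _ h1 with e1 | e1 <;> rcases S2.sign_mem _ _ h2 with e2 | e2 <;>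
        simp [e1, e2]
/-- The cycle on `ZMod n` (vertices `0,1,…,n-1`) with the single negative edge `{0,1}`. -/
noncomputable def Cneg (n : ℕ) : SGraph (ZMod n) where
  G := { Adj := fun i j => i ≠ j ∧ (i - j = 1 ∨ j - i = 1)
         symm := ⟨fun i j ⟨h1, h2⟩ => ⟨h1.symm, h2.symm⟩⟩
         loopless := ⟨fun i ⟨h1, _⟩ => h1 rfl⟩ }
  sign := fun i j => if (i = 0 ∧ j = 1) ∨ (i = 1 ∧ j = 0) then -1 else 1
  sign_symm := by
    intro u v
    try dsimp only
    exact if_congr (by tauto) rfl rfl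
  sign_mem := by
    intro u v _
    try dsimp only
    by_cases h : (u = 0 ∧ v = 1) ∨ (u = 1 ∧ v = 0)
    · rw [if_pos h]; exact Or.inr rfl
    · rw [if_neg h]; exact Or.inl rfl

/-- The all-negative complete signed graph on `n` vertices. -/
def Kneg (n : ℕ) : SGraph (Fin n) where
  G := ⊤
  sign := fun _ _ => -1
  sign_symm := fun _ _ => rfl
  sign_mem := fun _ _ _ => Or.inr rfl

/-- The edgeless signed graph on `k` vertices. -/
def Nk (k : ℕ) : SGraph (Fin k) where
  G := ⊥
  sign := fun _ _ => 1
  sign_symm := fun _ _ => rfl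
  sign_mem := fun _ _ h => (h.elim)

/-- The lexicographic product of simple graphs. -/
def lexProdGraph (G : SimpleGraph V1) (H : SimpleGraph V2) : SimpleGraph (V1 × V2) where
  Adj p q := G.Adj p.1 q.1 ∨ (p.1 = q.1 ∧ H.Adj p.2 q.2)
  symm := by
    constructor
    rintro p q (h | ⟨h1, h2⟩)
    · exact Or.inl h.symm
    · exact Or.inr ⟨h1.symm, h2.symm⟩
  loopless := by
    constructor
    rintro p (h | ⟨_, h⟩)
    · exact G.irrefl h
    · exact H.irrefl h

theorem stmt7 (m n : ℕ) (hmn : n ≤ m) (k : ℕ) (ζ1 : Fin m → Fin k → ℤ)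
    (h1 : IsPosSwitching (Kneg m) k ζ1) :
    IsPosSwitching (cartProd (Kneg m) (Kneg n)) k
      (fun p i => ζ1 (p.1 + Fin.castLE hmn p.2) i) := by
  obtain ⟨hval, hnz, hsgn⟩ := h1
  have hadj' : ∀ a b : Fin m, a ≠ b → (Kneg m).G.Adj a b := fun a b h => h
  have key : ∀ p q : Fin m × Fin n, (cartProd (Kneg m) (Kneg n)).G.Adj p q →
      p.1 + Fin.castLE hmn p.2 ≠ q.1 + Fin.castLE hmn q.2 := by
    intro p q hadj
    haveI : NeZero m := ⟨(p.1.pos).ne'⟩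
    rcases SimpleGraph.boxProd_adj.mp hadj with ⟨h, he⟩ | ⟨h, he⟩
    · have hne : p.1 ≠ q.1 := h
      rw [he]
      exact fun hc => hne (add_right_cancel hc)
    · have hne : p.2 ≠ q.2 := h
      rw [he]
      intro hc
      exact hne (Fin.castLE_injective hmn (add_left_cancel hc))
  refine ⟨fun p i => hval _ i, ?_, ?_⟩
  · intro p q hadj
    exact hnz _ _ (hadj' _ _ (key p q hadj))
  · intro p q hadj
    have := hsgn _ _ (hadj' _ _ (key p q hadj))
    simp only [Kneg] at this
    simp only [cartProd, Kneg]
    split <;> exact this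
end

section
/- If Σ₁ and Σ₂ are signed graphs each having at least one edge, and Σ₂ has at least one negative edge, then the balancing dimension of the HG-lexicographic product Σ₁[Σ₂] is at least 3. -/
open Finset
open scoped Classical

variable {V V1 V2 W : Type*}

/-- Auxiliary assignment used to build a positive switching for any finite signed graph. -/
private noncomputable def auxF (S : SGraph V) (u : V) (p : V × V) : ℤ :=
  if u = p.1 ∧ S.G.Adj p.1 p.2 then 1
  else if u = p.2 ∧ S.G.Adj p.1 p.2 then S.sign p.1 p.2 else 0

private lemma auxF_vals (S : SGraph V) (u : V) (p : V × V) :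
    auxF S u p = -1 ∨ auxF S u p = 0 ∨ auxF S u p = 1 := by
  unfold auxF
  split_ifs with h h'
  · exact Or.inr (Or.inr rfl)
  · rcases S.sign_mem _ _ h'.2 with e | e
    · rw [e]; exact Or.inr (Or.inr rfl)
    · rw [e]; exact Or.inl rfl
  · exact Or.inr (Or.inl rfl)

private lemma auxF_zero (S : SGraph V) (u v : V) (huv : u ≠ v) (p : V × V)
    (hp1 : p ≠ (u, v)) (hp2 : p ≠ (v, u)) : auxF S u p * auxF S v p = 0 := by
  by_cases hu : auxF S u p = 0
  · rw [hu, zero_mul]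
  by_cases hv : auxF S v p = 0
  · rw [hv, mul_zero]
  exfalso
  have hu' : (u = p.1 ∨ u = p.2) ∧ S.G.Adj p.1 p.2 := by
    unfold auxF at hu; split_ifs at hu with h h'
    · exact ⟨Or.inl h.1, h.2⟩
    · exact ⟨Or.inr h'.1, h'.2⟩
    · exact absurd rfl hu
  have hv' : (v = p.1 ∨ v = p.2) ∧ S.G.Adj p.1 p.2 := by
    unfold auxF at hv; split_ifs at hv with h h'
    · exact ⟨Or.inl h.1, h.2⟩
    · exact ⟨Or.inr h'.1, h'.2⟩
    · exact absurd rfl hv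
  rcases hu'.1 with hu1 | hu1 <;> rcases hv'.1 with hv1 | hv1
  · exact huv (hu1.trans hv1.symm)
  · exact hp1 (by rw [Prod.ext_iff]; exact ⟨hu1.symm, hv1.symm⟩)
  · exact hp2 (by rw [Prod.ext_iff]; exact ⟨hv1.symm, hu1.symm⟩)
  · exact huv (hu1.trans hv1.symm)

private lemma auxF_sum [Fintype V] (S : SGraph V) (u v : V) (huv : S.G.Adj u v) :
    (∑ p : V × V, auxF S u p * auxF S v p) = 2 * S.sign u v := by
  classical
  have hne : (u, v) ≠ (v, u) := by
    intro h
    exact huv.ne (congrArg Prod.fst h)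
  rw [Finset.sum_eq_add_of_mem (u, v) (v, u) (Finset.mem_univ _) (Finset.mem_univ _) hne
    (fun c _ hc => auxF_zero S u v huv.ne c hc.1 hc.2)]
  have h1 : auxF S u (u, v) = 1 := by unfold auxF; rw [if_pos ⟨rfl, huv⟩]
  have h2 : auxF S v (u, v) = S.sign u v := by
    unfold auxF
    rw [if_neg (fun h => huv.ne h.1.symm), if_pos ⟨rfl, huv⟩]
  have h3 : auxF S u (v, u) = S.sign v u := by
    unfold auxF
    rw [if_neg (fun h => huv.ne h.1), if_pos ⟨rfl, huv.symm⟩]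
  have h4 : auxF S v (v, u) = 1 := by unfold auxF; rw [if_pos ⟨rfl, huv.symm⟩]
  rw [h1, h2, h3, h4, S.sign_symm v u]
  ring

/-- Every finite signed graph admits a positive switching for some `k ≥ 1`. -/
private lemma exists_pos_switching [Fintype V] (S : SGraph V) :
    ∃ k, 1 ≤ k ∧ HasPosSwitching S k := by
  classical
  refine ⟨Fintype.card (V × V) + 1, Nat.le_add_left 1 _, ?_⟩
  -- use an embedding of V × V into Fin (card + 1)
  let e : V × V ≃ Fin (Fintype.card (V × V)) := Fintype.equivFin (V × V)
  let ζ : V → Fin (Fintype.card (V × V) + 1) → ℤ := fun u i =>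
    if h : (i : ℕ) < Fintype.card (V × V) then auxF S u (e.symm ⟨i, h⟩) else 0
  have hsum : ∀ u v, (∑ i, ζ u i * ζ v i) = ∑ p : V × V, auxF S u p * auxF S v p := by
    intro u v
    rw [Fin.sum_univ_castSucc]
    have hlast : ζ u (Fin.last _) * ζ v (Fin.last _) = 0 := by
      have : ¬ ((Fin.last (Fintype.card (V × V)) : ℕ) < Fintype.card (V × V)) := by
        simp [Fin.last]
      simp only [ζ, dif_neg this, zero_mul]
    rw [hlast, add_zero]
    have : ∀ i : Fin (Fintype.card (V × V)),
        ζ u (Fin.castSucc i) * ζ v (Fin.castSucc i) =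
          auxF S u (e.symm i) * auxF S v (e.symm i) := by
      intro i
      have hi : ((Fin.castSucc i : Fin (Fintype.card (V × V) + 1)) : ℕ) <
          Fintype.card (V × V) := i.isLt
      simp only [ζ, dif_pos hi]
      congr 2
    rw [Finset.sum_congr rfl (fun i _ => this i)]
    exact Equiv.sum_comp e.symm (fun p => auxF S u p * auxF S v p)
  refine ⟨ζ, ?_, ?_, ?_⟩
  · intro v i
    simp only [ζ]
    split_ifs with h
    · exact auxF_vals S v _
    · exact Or.inr (Or.inl rfl)
  · intro u v huv
    rw [hsum, auxF_sum S u v huv]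
    rcases S.sign_mem u v huv with h | h <;> rw [h] <;> decide
  · intro u v huv
    rw [hsum, auxF_sum S u v huv]
    rcases S.sign_mem u v huv with h | h <;> rw [h] <;> decide

private lemma dim1_case (a c e : ℤ)
    (ha : a = -1 ∨ a = 0 ∨ a = 1) (hc : c = -1 ∨ c = 0 ∨ c = 1)
    (he : e = -1 ∨ e = 0 ∨ e = 1)
    (h1 : a * c ≠ 0) (h2 : c * e ≠ 0) (h3 : a * e ≠ 0)
    (hs : Int.sign (a * c) * Int.sign (c * e) * Int.sign (a * e) = -1) : False := by
  rcases ha with rfl | rfl | rfl <;> rcases hc with rfl | rfl | rfl <;>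
    rcases he with rfl | rfl | rfl <;> revert h1 h2 h3 hs <;> decide

private lemma dim2_case (a b c d e f : ℤ)
    (ha : a = -1 ∨ a = 0 ∨ a = 1) (hb : b = -1 ∨ b = 0 ∨ b = 1)
    (hc : c = -1 ∨ c = 0 ∨ c = 1) (hd : d = -1 ∨ d = 0 ∨ d = 1)
    (he : e = -1 ∨ e = 0 ∨ e = 1) (hf : f = -1 ∨ f = 0 ∨ f = 1)
    (h1 : a * c + b * d ≠ 0) (h2 : c * e + d * f ≠ 0) (h3 : a * e + b * f ≠ 0)
    (hs : Int.sign (a * c + b * d) * Int.sign (c * e + d * f) *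
      Int.sign (a * e + b * f) = -1) : False := by
  rcases ha with rfl | rfl | rfl <;> rcases hb with rfl | rfl | rfl <;>
    rcases hc with rfl | rfl | rfl <;> rcases hd with rfl | rfl | rfl <;>
    rcases he with rfl | rfl | rfl <;> rcases hf with rfl | rfl | rfl <;>
    revert h1 h2 h3 hs <;> decide

/-- A signed graph with a negative triangle has no positive switching for `k ≤ 2`. -/
private lemma triangle_bound [Fintype V] (S : SGraph V) (x y z : V)
    (hxy : S.G.Adj x y) (hyz : S.G.Adj y z) (hxz : S.G.Adj x z)
    (hneg : S.sign x y * S.sign y z * S.sign x z = -1)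
    (k : ℕ) (hk : k ≤ 2) : ¬ HasPosSwitching S k := by
  rintro ⟨ζ, hval, hnz, hsg⟩
  -- signs of the three inner products multiply to -1
  have key : Int.sign (∑ i, ζ x i * ζ y i) * Int.sign (∑ i, ζ y i * ζ z i) *
      Int.sign (∑ i, ζ x i * ζ z i) = -1 := by
    have e1 := hsg x y hxy
    have e2 := hsg y z hyz
    have e3 := hsg x z hxz
    have s1 : Int.sign (∑ i, ζ x i * ζ y i) = S.sign x y := by
      rcases S.sign_mem x y hxy with h | h <;> rw [h] at e1 ⊢ <;> omega
    have s2 : Int.sign (∑ i, ζ y i * ζ z i) = S.sign y z := by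
      rcases S.sign_mem y z hyz with h | h <;> rw [h] at e2 ⊢ <;> omega
    have s3 : Int.sign (∑ i, ζ x i * ζ z i) = S.sign x z := by
      rcases S.sign_mem x z hxz with h | h <;> rw [h] at e3 ⊢ <;> omega
    rw [s1, s2, s3, hneg]
  interval_cases k
  · exact hnz x y hxy (by simp)
  · have h1 := hnz x y hxy
    have h2 := hnz y z hyz
    have h3 := hnz x z hxz
    simp only [Fin.sum_univ_one] at h1 h2 h3 key
    exact dim1_case (ζ x 0) (ζ y 0) (ζ z 0) (hval x 0) (hval y 0) (hval z 0) h1 h2 h3 key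
  · have h1 := hnz x y hxy
    have h2 := hnz y z hyz
    have h3 := hnz x z hxz
    simp only [Fin.sum_univ_two] at h1 h2 h3 key
    exact dim2_case (ζ x 0) (ζ x 1) (ζ y 0) (ζ y 1) (ζ z 0) (ζ z 1)
      (hval x 0) (hval x 1) (hval y 0) (hval y 1) (hval z 0) (hval z 1) h1 h2 h3 key

theorem stmt8 [Fintype V1] [Fintype V2] (S1 : SGraph V1) (S2 : SGraph V2)
    (h1 : ∃ a b, S1.G.Adj a b)
    (h2 : ∃ c d, S2.G.Adj c d ∧ S2.sign c d = -1) :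
    3 ≤ bdim (lexHG S1 S2) := by
  obtain ⟨a, b, hab⟩ := h1
  obtain ⟨c, d, hcd, hneg⟩ := h2
  set S := lexHG S1 S2 with hS
  -- the negative triangle
  have hxy : S.G.Adj (a, c) (a, d) := Or.inr ⟨rfl, hcd⟩
  have hyz : S.G.Adj (a, d) (b, c) := Or.inl hab
  have hxz : S.G.Adj (a, c) (b, c) := Or.inl hab
  have sxy : S.sign (a, c) (a, d) = -1 := by
    show (if a = a then S2.sign c d else S1.sign a a) = -1
    rw [if_pos rfl, hneg]
  have syz : S.sign (a, d) (b, c) = S1.sign a b := by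
    show (if a = b then S2.sign d c else S1.sign a b) = S1.sign a b
    rw [if_neg hab.ne]
  have sxz : S.sign (a, c) (b, c) = S1.sign a b := by
    show (if a = b then S2.sign c c else S1.sign a b) = S1.sign a b
    rw [if_neg hab.ne]
  have hprod : S.sign (a, c) (a, d) * S.sign (a, d) (b, c) * S.sign (a, c) (b, c) = -1 := by
    rw [sxy, syz, sxz]
    rcases S1.sign_mem a b hab with h | h <;> rw [h] <;> ring
  have hne : {k | 1 ≤ k ∧ HasPosSwitching S k}.Nonempty := exists_pos_switching S
  have hmem := Nat.sInf_mem hne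
  obtain ⟨hge1, hsw⟩ := hmem
  by_contra hcon
  push_neg at hcon
  have hle2 : sInf {k | 1 ≤ k ∧ HasPosSwitching S k} ≤ 2 := by
    unfold bdim at hcon; omega
  exact triangle_bound S (a, c) (a, d) (b, c) hxy hyz hxz hprod _ hle2 hsw
end

section
/- If Σ₁ is antibalanced and Σ₂ is all-negative, then the HG-lexicographic product Σ₁[Σ₂] is antibalanced. -/
open Finset
open scoped Classical

variable {V V1 V2 W : Type*}

theorem stmt11 [Fintype V1] [Fintype V2] (S1 : SGraph V1) (S2 : SGraph V2)
    (h1 : S1.Antibalanced) (h2 : ∀ u v, S2.G.Adj u v → S2.sign u v = -1) :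
    (lexHG S1 S2).Antibalanced := by
  obtain ⟨ζ1, hval, hnz, hsgn⟩ := h1
  set η : V1 → ℤ := fun u => if ζ1 u 0 = 0 then 1 else ζ1 u 0 with hη
  have hη_ne : ∀ u, η u ≠ 0 := by
    intro u
    simp only [hη]
    split <;> simp_all
  have hη_eq : ∀ u, ζ1 u 0 ≠ 0 → η u = ζ1 u 0 := by
    intro u hu; simp [hη, hu]
  refine ⟨fun p _ => η p.1, ?_, ?_, ?_⟩
  · intro v _
    rcases hval v.1 0 with h | h | h <;> simp [hη, h]
  · rintro p q (h | ⟨heq, hadj⟩) <;> simp only [Fin.sum_univ_one]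
    · have hne := hnz p.1 q.1 h
      rw [Fin.sum_univ_one] at hne
      rw [hη_eq _ (left_ne_zero_of_mul hne), hη_eq _ (right_ne_zero_of_mul hne)]
      exact hne
    · exact mul_ne_zero (hη_ne p.1) (heq ▸ hη_ne p.1)
  · rintro p q (h | ⟨heq, hadj⟩) <;> simp only [Fin.sum_univ_one]
    · have hne := hnz p.1 q.1 h
      rw [Fin.sum_univ_one] at hne
      have hs := hsgn p.1 q.1 h
      rw [Fin.sum_univ_one] at hs
      have hsign : (lexHG S1 S2).neg.sign p q = S1.neg.sign p.1 q.1 := by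
        show -(if p.1 = q.1 then _ else _) = _
        rw [if_neg h.ne]; rfl
      rw [hsign, hη_eq _ (left_ne_zero_of_mul hne), hη_eq _ (right_ne_zero_of_mul hne)]
      exact hs
    · have hsign : (lexHG S1 S2).neg.sign p q = 1 := by
        show -(if p.1 = q.1 then S2.sign p.2 q.2 else _) = 1
        rw [if_pos heq, h2 _ _ hadj]; ring
      rw [hsign, heq]
      have : η q.1 * η q.1 = 1 := by
        rcases hval q.1 0 with h' | h' | h' <;> simp [hη, h']
      rw [this]; rfl
end

section
/- If signed graphs Σ₁ and Σ₁' are switching equivalent, then the BCD-lexicographic products Σ₁*Σ₂ and Σ₁'*Σ₂ are switching equivalent, for any signed graph Σ₂. -/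
open Finset
open scoped Classical

variable {V V1 V2 W : Type*}

theorem stmt14 (S1 S1' : SGraph V1) (S2 : SGraph V2)
    (h : SwitchEquiv S1 S1') : SwitchEquiv (lexBCD S1 S2) (lexBCD S1' S2) := by
  obtain ⟨hG, η, hη, hs⟩ := h
  constructor
  · show (⟨_, _, _⟩ : SimpleGraph _) = _
    congr 1
    ext p q
    rw [hG]
  · refine ⟨fun p => η p.1, fun p => hη p.1, ?_⟩
    rintro p q (hadj | ⟨h1, h2⟩) <;> simp only [lexBCD]
    · have hadj' : S1'.G.Adj p.1 q.1 := hG ▸ hadj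
      have hsq : η p.1 * η p.1 = 1 := by rcases hη p.1 with e | e <;> simp [e]
      by_cases h2 : S2.G.Adj p.2 q.2
      · rw [if_pos h2, if_pos h2, if_pos hadj, if_pos hadj', hs _ _ hadj]; ring
      · rw [if_neg h2, if_neg h2, hs _ _ hadj]
    · have hne : ¬ S1'.G.Adj p.1 q.1 := by rw [h1, ← hG]; exact S1.G.irrefl
      have hne1 : ¬ S1.G.Adj p.1 q.1 := by rw [h1]; exact S1.G.irrefl
      rw [if_pos h2, if_pos h2, if_neg hne, if_neg hne1, h1]
      rcases hη q.1 with e | e <;> simp [e]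
end

section
/- If Σ₁ is a balanced signed graph and Σ₂ is a signed complete graph on n vertices, then bdim(Σ₁*Σ₂) = bdim(Σ₂), where * is the BCD-lexicographic product. -/
open Finset
open scoped Classical

variable {V V1 V2 W : Type*}

private lemma sgn_self (x : ℤ) (hx : x = 1 ∨ x = -1) : Int.sign x = x := by
  rcases hx with h | h <;> simp [h]

private lemma factor_sum {k : ℕ} (a b : ℤ) (f g : Fin k → ℤ) :
    (∑ i, (a * f i) * (b * g i)) = (a * b) * ∑ i, f i * g i := by
  rw [Finset.mul_sum]; exact Finset.sum_congr rfl fun i _ => by ring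

theorem stmt16 [Fintype V1] [Fintype V2] [Nonempty V1] (S1 : SGraph V1) (S2 : SGraph V2)
    (h1 : S1.Balanced) (h2 : S2.G = ⊤) :
    bdim (lexBCD S1 S2) = bdim S2 := by
  obtain ⟨η, hηval, hηnz, hηsign⟩ := h1
  set e : V1 → ℤ := fun u => if η u 0 = 0 then 1 else η u 0 with he
  have heval : ∀ u, e u = 1 ∨ e u = -1 := by
    intro u
    simp only [he]
    split
    · exact Or.inl rfl
    · rcases hηval u 0 with h | h | h
      · exact Or.inr h
      · tauto
      · exact Or.inl h
  have hesq : ∀ u, e u * e u = 1 := by intro u; rcases heval u with h | h <;> simp [h]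
  have hprodpm : ∀ u u', e u * e u' = 1 ∨ e u * e u' = -1 := by
    intro u u'; rcases heval u with h | h <;> rcases heval u' with h' | h' <;> simp [h, h']
  have hesign : ∀ u u', S1.G.Adj u u' → S1.sign u u' = e u * e u' := by
    intro u u' hadj
    have hnz := hηnz u u' hadj
    rw [Fin.sum_univ_one] at hnz
    have hz1 : η u 0 ≠ 0 := fun h => hnz (by simp [h])
    have hz2 : η u' 0 ≠ 0 := fun h => hnz (by simp [h])
    have hs := hηsign u u' hadj
    rw [Fin.sum_univ_one] at hs
    have e1 : e u = η u 0 := by simp [he, hz1]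
    have e2 : e u' = η u' 0 := by simp [he, hz2]
    have a : η u 0 = 1 ∨ η u 0 = -1 := by
      rcases hηval u 0 with h | h | h
      exacts [Or.inr h, absurd h hz1, Or.inl h]
    have b : η u' 0 = 1 ∨ η u' 0 = -1 := by
      rcases hηval u' 0 with h | h | h
      exacts [Or.inr h, absurd h hz2, Or.inl h]
    rcases a with a | a <;> rcases b with b | b <;>
      simp [a, b, e1, e2] at hs ⊢ <;> omega
  have adj2 : ∀ v v' : V2, v ≠ v' → S2.G.Adj v v' := by
    intro v v' h; rw [h2]; exact h
  have lexadj : ∀ p q : V1 × V2, (lexBCD S1 S2).G.Adj p q ↔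
      (S1.G.Adj p.1 q.1 ∨ (p.1 = q.1 ∧ S2.G.Adj p.2 q.2)) := fun p q => Iff.rfl
  have lexsign : ∀ p q : V1 × V2, (lexBCD S1 S2).sign p q =
      if S2.G.Adj p.2 q.2 then
        (if S1.G.Adj p.1 q.1 then S1.sign p.1 q.1 * S2.sign p.2 q.2 else S2.sign p.2 q.2)
      else S1.sign p.1 q.1 := fun p q => rfl
  have key : ∀ k : ℕ, 1 ≤ k →
      (HasPosSwitching (lexBCD S1 S2) k ↔ HasPosSwitching S2 k) := by
    intro k hk
    constructor
    · rintro ⟨ζ, hval, hnz, hsign⟩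
      obtain ⟨u₀⟩ := ‹Nonempty V1›
      refine ⟨fun v => ζ (u₀, v), fun v i => hval _ i, ?_, ?_⟩
      · intro v v' h
        exact hnz (u₀, v) (u₀, v') (Or.inr ⟨rfl, h⟩)
      · intro v v' h
        have hc := hsign (u₀, v) (u₀, v') (Or.inr ⟨rfl, h⟩)
        have hns : ¬ S1.G.Adj u₀ u₀ := S1.G.irrefl
        rw [lexsign] at hc
        simpa [h, hns] using hc
    · rintro ⟨ζ₂, hval, hnz, hsign⟩
      by_cases hss : ∀ v v' : V2, v = v'
      · -- S2 has no edges
        have hnoadj : ∀ v v' : V2, ¬ S2.G.Adj v v' := by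
          intro v v' h; exact S2.G.irrefl ((hss v v') ▸ h)
        refine ⟨fun p i => if i = ⟨0, hk⟩ then e p.1 else 0, ?_, ?_, ?_⟩
        · intro v i
          dsimp only
          split
          · rcases heval v.1 with h | h <;> simp [h]
          · tauto
        all_goals
          intro p q hadj
          have hsum : (∑ i, (if i = (⟨0, hk⟩ : Fin k) then e p.1 else 0) *
              (if i = (⟨0, hk⟩ : Fin k) then e q.1 else 0)) = e p.1 * e q.1 := by
            have hterm : ∀ i : Fin k,
                (if i = (⟨0, hk⟩ : Fin k) then e p.1 else 0) *
                (if i = (⟨0, hk⟩ : Fin k) then e q.1 else 0) =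
                if i = (⟨0, hk⟩ : Fin k) then e p.1 * e q.1 else 0 := by
              intro i; split <;> simp
            rw [Finset.sum_congr rfl fun i _ => hterm i, Finset.sum_ite_eq']
            simp
          have hA1 : S1.G.Adj p.1 q.1 := by
            rcases (lexadj p q).mp hadj with h | ⟨_, h⟩
            · exact h
            · exact absurd h (hnoadj _ _)
        · rw [hsum]
          rcases hprodpm p.1 q.1 with h | h <;> simp [h]
        · rw [hsum, lexsign, if_neg (hnoadj p.2 q.2),
            sgn_self _ (hprodpm p.1 q.1), hesign p.1 q.1 hA1]
          rcases hprodpm p.1 q.1 with h | h <;> rw [h] <;> norm_num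
      · push_neg at hss
        have hpos : ∀ v : V2, 0 < ∑ i, ζ₂ v i * ζ₂ v i := by
          intro v
          obtain ⟨v₀, v₁, hvv⟩ := hss
          have hex : ∃ w, v ≠ w := by
            by_cases h : v = v₀
            · exact ⟨v₁, h ▸ hvv⟩
            · exact ⟨v₀, h⟩
          obtain ⟨w, hw⟩ := hex
          have hnz' := hnz v w (adj2 v w hw)
          have hex2 : ∃ i, ζ₂ v i ≠ 0 := by
            by_contra hall
            push_neg at hall
            exact hnz' (Finset.sum_eq_zero fun i _ => by rw [hall i, zero_mul])
          obtain ⟨i, hi⟩ := hex2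
          exact Finset.sum_pos' (fun j _ => mul_self_nonneg _)
            ⟨i, Finset.mem_univ i, mul_self_pos.mpr hi⟩
        refine ⟨fun p i => e p.1 * ζ₂ p.2 i, ?_, ?_, ?_⟩
        · intro v i
          rcases heval v.1 with h | h <;> rcases hval v.2 i with h' | h' | h' <;>
            simp [h, h']
        all_goals
          intro p q hadj
          have hfac := factor_sum (e p.1) (e q.1) (ζ₂ p.2) (ζ₂ q.2)
          have hQ : (∑ i, ζ₂ p.2 i * ζ₂ q.2 i) ≠ 0 := by
            by_cases hv : p.2 = q.2
            · rw [hv]; exact (hpos q.2).ne'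
            · exact hnz p.2 q.2 (adj2 _ _ hv)
        · rw [hfac]
          exact mul_ne_zero (by rcases hprodpm p.1 q.1 with h | h <;> simp [h]) hQ
        · rw [hfac, Int.sign_mul, sgn_self _ (hprodpm p.1 q.1), lexsign]
          rcases (lexadj p q).mp hadj with hA1 | ⟨hA1, hA2⟩
          · by_cases hv : p.2 = q.2
            · have hns : ¬ S2.G.Adj p.2 q.2 := fun h => S2.G.irrefl (hv ▸ h)
              rw [if_neg hns, hesign p.1 q.1 hA1]
              have : Int.sign (∑ i, ζ₂ p.2 i * ζ₂ q.2 i) = 1 := by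
                rw [hv]; exact Int.sign_eq_one_of_pos (hpos q.2)
              rw [this, mul_one]
              rcases hprodpm p.1 q.1 with h | h <;> rw [h] <;> norm_num
            · have hA2 : S2.G.Adj p.2 q.2 := adj2 _ _ hv
              rw [if_pos hA2, if_pos hA1, hesign p.1 q.1 hA1]
              have hs2 := hsign p.2 q.2 hA2
              have hε := hesq p.1
              have hε' := hesq q.1
              calc e p.1 * e q.1 * S2.sign p.2 q.2 *
                    (e p.1 * e q.1 * Int.sign (∑ i, ζ₂ p.2 i * ζ₂ q.2 i))
                  = (e p.1 * e p.1) * (e q.1 * e q.1) *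
                    (S2.sign p.2 q.2 * Int.sign (∑ i, ζ₂ p.2 i * ζ₂ q.2 i)) := by ring
                _ = 1 := by rw [hε, hε', hs2]; ring
          · have hns : ¬ S1.G.Adj p.1 q.1 := fun h => S1.G.irrefl (hA1 ▸ h)
            rw [if_pos hA2, if_neg hns]
            have : e p.1 * e q.1 = 1 := by rw [hA1]; exact hesq q.1
            rw [this, one_mul]
            exact hsign p.2 q.2 hA2
  unfold bdim
  congr 1
  ext k
  constructor <;> rintro ⟨hk, h⟩
  · exact ⟨hk, (key k hk).mp h⟩
  · exact ⟨hk, (key k hk).mpr h⟩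
end
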